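/- arXiv:1608.05716 — 4 statements merged into one kernel-verified Lean document; each statement's English description precedes it below -/
import Mathlib

section
/- For an integer p ≥ 2, the function a₀(τ) = ((1-τ)/2)^{p+1}·((1+τ)/2)^{p-1}·∫₀^τ ds/((1+s)^p (1-s)^{p+2}) satisfies the ODE (1-τ²)·a₀''(τ) + 2(1-(1-p)τ)·a₀'(τ) + 2p·a₀(τ) = 0 on (-1,1). -/
set_option maxHeartbeats 2000000

lemma aux_pow_sub_one (m : ℕ) {x : ℝ} (hx : x ≠ 0) :
    (m:ℝ) * x ^ (m - 1) = (m:ℝ) * x ^ m / x := by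
  cases m with
  | zero => simp
  | succ k =>
      rw [Nat.add_sub_cancel, pow_succ]
      field_simp

/-- The singular branch
`a₀(τ) = ((1-τ)/2)^(p+1) ((1+τ)/2)^(p-1) ∫₀^τ ds/((1+s)^p (1-s)^(p+2))`
solves `(1-τ²)a₀'' + 2(1-(1-p)τ)a₀' + 2p a₀ = 0` on `(-1,1)`. -/
theorem jacobi_singular_branch_spin1 (p : ℕ) (hp : 2 ≤ p) :
    ∀ τ ∈ Set.Ioo (-1 : ℝ) 1,
      (1 - τ ^ 2) *
          deriv (deriv (fun t : ℝ => ((1 - t) / 2) ^ (p + 1) * ((1 + t) / 2) ^ (p - 1) *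
            ∫ s in (0 : ℝ)..t, 1 / ((1 + s) ^ p * (1 - s) ^ (p + 2)))) τ
        + 2 * (1 - (1 - (p : ℝ)) * τ) *
          deriv (fun t : ℝ => ((1 - t) / 2) ^ (p + 1) * ((1 + t) / 2) ^ (p - 1) *
            ∫ s in (0 : ℝ)..t, 1 / ((1 + s) ^ p * (1 - s) ^ (p + 2))) τ
        + 2 * (p : ℝ) * (((1 - τ) / 2) ^ (p + 1) * ((1 + τ) / 2) ^ (p - 1) *
            ∫ s in (0 : ℝ)..τ, 1 / ((1 + s) ^ p * (1 - s) ^ (p + 2))) = 0 := by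
  obtain ⟨m, rfl⟩ : ∃ m, p = m + 2 := ⟨p - 2, by omega⟩
  intro τ hτ
  obtain ⟨hτ1, hτ2⟩ := hτ
  simp only [show m + 2 + 1 = m + 3 by omega, show m + 2 - 1 = m + 1 by omega,
    show m + 2 + 2 = m + 4 by omega]
  set g : ℝ → ℝ := fun s => 1 / ((1 + s) ^ (m + 2) * (1 - s) ^ (m + 4)) with hgdef
  set F : ℝ → ℝ := fun t => ∫ s in (0 : ℝ)..t, g s with hFdef
  set u : ℝ → ℝ := fun t => ((1 - t) / 2) ^ (m + 3) * ((1 + t) / 2) ^ (m + 1) with hudef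
  set du : ℝ → ℝ := fun t =>
      -(((m:ℝ) + 3) / 2) * ((1 - t) / 2) ^ (m + 2) * ((1 + t) / 2) ^ (m + 1)
      + (((m:ℝ) + 1) / 2) * ((1 - t) / 2) ^ (m + 3) * ((1 + t) / 2) ^ m with hdudef
  have h1 : (0:ℝ) < 1 + τ := by linarith
  have h2 : (0:ℝ) < 1 - τ := by linarith
  have h1' : (1:ℝ) + τ ≠ 0 := ne_of_gt h1
  have h2' : (1:ℝ) - τ ≠ 0 := ne_of_gt h2
  have hB0 : ((1 + τ) / 2 : ℝ) ≠ 0 := by positivity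
  -- basic building-block derivatives
  have hA : ∀ t : ℝ, HasDerivAt (fun t : ℝ => (1 - t) / 2) (-(1/2)) t := by
    intro t
    have := ((hasDerivAt_id t).const_sub 1).div_const 2
    refine this.congr_deriv ?_
    norm_num
  have hB : ∀ t : ℝ, HasDerivAt (fun t : ℝ => (1 + t) / 2) (1/2) t := by
    intro t
    have := ((hasDerivAt_id t).const_add 1).div_const 2
    exact this
  -- continuity of g on Ioo
  have hDne : ∀ s ∈ Set.Ioo (-1:ℝ) 1, ((1 + s) ^ (m + 2) * (1 - s) ^ (m + 4) : ℝ) ≠ 0 := by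
    intro s hs
    have : (0:ℝ) < 1 + s := by linarith [hs.1]
    have : (0:ℝ) < 1 - s := by linarith [hs.2]
    positivity
  have hgc : ContinuousOn g (Set.Ioo (-1:ℝ) 1) :=
    ContinuousOn.div continuousOn_const (by fun_prop) hDne
  -- derivative of F
  have hF : ∀ t ∈ Set.Ioo (-1:ℝ) 1, HasDerivAt F (g t) t := by
    intro t ht
    have h0 : (0:ℝ) ∈ Set.Ioo (-1:ℝ) 1 := by norm_num
    have hsub : Set.uIcc (0:ℝ) t ⊆ Set.Ioo (-1:ℝ) 1 :=
      Set.OrdConnected.uIcc_subset Set.ordConnected_Ioo h0 ht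
    exact intervalIntegral.integral_hasDerivAt_right
      ((hgc.mono hsub).intervalIntegrable)
      (hgc.stronglyMeasurableAtFilter isOpen_Ioo t ht)
      (hgc.continuousAt (isOpen_Ioo.mem_nhds ht))
  -- derivative of u
  have hu : ∀ t : ℝ, HasDerivAt u (du t) t := by
    intro t
    have := ((hA t).fun_pow (m + 3)).mul ((hB t).fun_pow (m + 1))
    refine this.congr_deriv ?_
    simp only [show m + 3 - 1 = m + 2 by omega, show m + 1 - 1 = m by omega]
    push_cast
    ring
  -- first derivative of a₀
  have ha : ∀ t ∈ Set.Ioo (-1:ℝ) 1,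
      HasDerivAt (fun t : ℝ => u t * F t) (du t * F t + u t * g t) t := by
    intro t ht
    exact (hu t).mul (hF t ht)
  -- derivative of du at τ
  have hdu : HasDerivAt du
      (((m:ℝ)+3)*((m:ℝ)+2)/4 * ((1-τ)/2)^(m+1) * ((1+τ)/2)^(m+1)
       - ((m:ℝ)+3)*((m:ℝ)+1)/2 * ((1-τ)/2)^(m+2) * ((1+τ)/2)^m
       + ((m:ℝ)+1)*(m:ℝ)/4 * ((1-τ)/2)^(m+3) * (((1+τ)/2)^m / ((1+τ)/2))) τ := by
    have := ((((hA τ).fun_pow (m+2)).const_mul (-(((m:ℝ) + 3) / 2))).mul ((hB τ).fun_pow (m+1))).add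
      ((((hA τ).fun_pow (m+3)).const_mul (((m:ℝ) + 1) / 2)).mul ((hB τ).fun_pow m))
    refine this.congr_deriv ?_
    simp only [show m + 3 - 1 = m + 2 by omega, show m + 2 - 1 = m + 1 by omega,
      show m + 1 - 1 = m by omega]
    rw [aux_pow_sub_one m hB0]
    push_cast
    field_simp
    ring
  -- derivative of g at τ
  have hDd : HasDerivAt (fun s : ℝ => (1 + s) ^ (m + 2) * (1 - s) ^ (m + 4))
      (((m:ℝ)+2) * (1+τ)^(m+1) * (1-τ)^(m+4)
       - ((m:ℝ)+4) * (1+τ)^(m+2) * (1-τ)^(m+3)) τ := by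
    have h1d : HasDerivAt (fun s : ℝ => 1 + s) 1 τ := by
      simpa using (hasDerivAt_id τ).const_add 1
    have h2d : HasDerivAt (fun s : ℝ => 1 - s) (-1) τ := by
      simpa using (hasDerivAt_id τ).const_sub 1
    have := (h1d.fun_pow (m+2)).mul (h2d.fun_pow (m+4))
    refine this.congr_deriv ?_
    simp only [show m + 2 - 1 = m + 1 by omega, show m + 4 - 1 = m + 3 by omega]
    push_cast
    ring
  have hDτ : ((1 + τ) ^ (m + 2) * (1 - τ) ^ (m + 4) : ℝ) ≠ 0 :=
    hDne τ ⟨hτ1, hτ2⟩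
  have hg' : HasDerivAt g
      ((0 * ((1+τ)^(m+2) * (1-τ)^(m+4))
        - 1 * (((m:ℝ)+2) * (1+τ)^(m+1) * (1-τ)^(m+4)
          - ((m:ℝ)+4) * (1+τ)^(m+2) * (1-τ)^(m+3)))
       / ((1+τ)^(m+2) * (1-τ)^(m+4))^2) τ :=
    (hasDerivAt_const τ (1:ℝ)).div hDd hDτ
  -- second derivative
  have ha1 : HasDerivAt (fun t => du t * F t + u t * g t)
      ((((m:ℝ)+3)*((m:ℝ)+2)/4 * ((1-τ)/2)^(m+1) * ((1+τ)/2)^(m+1)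
       - ((m:ℝ)+3)*((m:ℝ)+1)/2 * ((1-τ)/2)^(m+2) * ((1+τ)/2)^m
       + ((m:ℝ)+1)*(m:ℝ)/4 * ((1-τ)/2)^(m+3) * (((1+τ)/2)^m / ((1+τ)/2))) * F τ
        + du τ * g τ
       + (du τ * g τ + u τ *
         ((0 * ((1+τ)^(m+2) * (1-τ)^(m+4))
        - 1 * (((m:ℝ)+2) * (1+τ)^(m+1) * (1-τ)^(m+4)
          - ((m:ℝ)+4) * (1+τ)^(m+2) * (1-τ)^(m+3)))
       / ((1+τ)^(m+2) * (1-τ)^(m+4))^2))) τ :=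
    (hdu.mul (hF τ ⟨hτ1, hτ2⟩)).add ((hu τ).mul hg')
  -- rewrite the derivs in the goal
  have hev : deriv (fun t : ℝ => u t * F t) =ᶠ[nhds τ] fun t => du t * F t + u t * g t := by
    filter_upwards [isOpen_Ioo.mem_nhds (⟨hτ1, hτ2⟩ : τ ∈ Set.Ioo (-1:ℝ) 1)] with t ht
    exact (ha t ht).deriv
  have hd1 : deriv (fun t : ℝ => u t * F t) τ = du τ * F τ + u τ * g τ :=
    (ha τ ⟨hτ1, hτ2⟩).deriv
  have hd2 : deriv (deriv (fun t : ℝ => u t * F t)) τ =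
      (((m:ℝ)+3)*((m:ℝ)+2)/4 * ((1-τ)/2)^(m+1) * ((1+τ)/2)^(m+1)
       - ((m:ℝ)+3)*((m:ℝ)+1)/2 * ((1-τ)/2)^(m+2) * ((1+τ)/2)^m
       + ((m:ℝ)+1)*(m:ℝ)/4 * ((1-τ)/2)^(m+3) * (((1+τ)/2)^m / ((1+τ)/2))) * F τ
        + du τ * g τ
       + (du τ * g τ + u τ *
         ((0 * ((1+τ)^(m+2) * (1-τ)^(m+4))
        - 1 * (((m:ℝ)+2) * (1+τ)^(m+1) * (1-τ)^(m+4)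
          - ((m:ℝ)+4) * (1+τ)^(m+2) * (1-τ)^(m+3)))
       / ((1+τ)^(m+2) * (1-τ)^(m+4))^2)) := by
    rw [Filter.EventuallyEq.deriv_eq hev]
    exact ha1.deriv
  show (1 - τ ^ 2) * deriv (deriv (fun t : ℝ => u t * F t)) τ
      + 2 * (1 - (1 - ((m:ℕ)+2 : ℕ)) * τ) * deriv (fun t : ℝ => u t * F t) τ
      + 2 * ((m:ℕ)+2 : ℕ) * (u τ * F τ) = 0
  rw [hd1, hd2, hgdef, hudef, hdudef]
  simp only
  push_cast
  simp only [pow_add]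
  field_simp
  ring
end

section
/- Let p ≥ 1 and ℓ with 1 ≤ ℓ ≤ p be integers and set λ = √(ℓ(ℓ+1)). Suppose a₀, a₂ : (-1,1) → ℝ are differentiable and satisfy the coupled system: (1+τ)·a₀'(τ) + (λ²(1+τ)/(2p) - (p-1))·a₀(τ) + (λ²(1-τ)/(2p))·a₂(τ) = 0 and (1-τ)·a₂'(τ) - (λ²(1+τ)/(2p))·a₀(τ) - (λ²(1-τ)/(2p) - (p-1))·a₂(τ) = 0. Then a₀ satisfies the decoupled second-order equation (1-τ²)·a₀''(τ) + 2(1-(1-p)τ)·a₀'(τ) + (p+ℓ)(ℓ-p+1)·a₀(τ) = 0. -/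
/-- Decoupling of the first-order coupled transport system for the Maxwell
coefficients `a₀, a₂` into the Jacobi-type second order ODE for `a₀`. -/
theorem maxwell_decoupling (p ℓ : ℤ) (hp : 1 ≤ p) (hℓ : 1 ≤ ℓ) (hℓp : ℓ ≤ p)
    (a₀ a₂ : ℝ → ℝ) (hd₀ : Differentiable ℝ a₀) (hd₂ : Differentiable ℝ a₂)
    (h₀ : ∀ τ ∈ Set.Ioo (-1 : ℝ) 1,
      (1 + τ) * deriv a₀ τ
        + ((Real.sqrt ((ℓ : ℝ) * ((ℓ : ℝ) + 1))) ^ 2 * (1 + τ) / (2 * (p : ℝ)) - ((p : ℝ) - 1))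
          * a₀ τ
        + ((Real.sqrt ((ℓ : ℝ) * ((ℓ : ℝ) + 1))) ^ 2 * (1 - τ) / (2 * (p : ℝ))) * a₂ τ = 0)
    (h₂ : ∀ τ ∈ Set.Ioo (-1 : ℝ) 1,
      (1 - τ) * deriv a₂ τ
        - ((Real.sqrt ((ℓ : ℝ) * ((ℓ : ℝ) + 1))) ^ 2 * (1 + τ) / (2 * (p : ℝ))) * a₀ τ
        - ((Real.sqrt ((ℓ : ℝ) * ((ℓ : ℝ) + 1))) ^ 2 * (1 - τ) / (2 * (p : ℝ)) - ((p : ℝ) - 1))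
          * a₂ τ = 0) :
    ∀ τ ∈ Set.Ioo (-1 : ℝ) 1,
      (1 - τ ^ 2) * deriv (deriv a₀) τ + 2 * (1 - (1 - (p : ℝ)) * τ) * deriv a₀ τ
        + ((p : ℝ) + (ℓ : ℝ)) * ((ℓ : ℝ) - (p : ℝ) + 1) * a₀ τ = 0 := by
  have hℓ1 : (1 : ℝ) ≤ (ℓ : ℝ) := by exact_mod_cast hℓ
  have hp1 : (1 : ℝ) ≤ (p : ℝ) := by exact_mod_cast hp
  have hp0 : (p : ℝ) ≠ 0 := by linarith
  have hLnn : (0 : ℝ) ≤ (ℓ : ℝ) * ((ℓ : ℝ) + 1) := by nlinarith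
  have hsq : (Real.sqrt ((ℓ : ℝ) * ((ℓ : ℝ) + 1))) ^ 2 = (ℓ : ℝ) * ((ℓ : ℝ) + 1) :=
    Real.sq_sqrt hLnn
  -- abbreviate
  set L : ℝ := (ℓ : ℝ) * ((ℓ : ℝ) + 1) with hLdef
  intro τ hτ
  obtain ⟨ht1, ht2⟩ := hτ
  have h1p : (0 : ℝ) < 1 + τ := by linarith
  have h1p' : (1 : ℝ) + τ ≠ 0 := ne_of_gt h1p
  -- the function equal to `deriv a₀` on the interval
  set g : ℝ → ℝ := fun t =>
    (((p : ℝ) - 1) - L * (1 + t) / (2 * (p : ℝ))) * a₀ t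
      - (L * (1 - t) / (2 * (p : ℝ))) * a₂ t with hgdef
  have hg : ∀ t ∈ Set.Ioo (-1 : ℝ) 1, (1 + t) * deriv a₀ t = g t := by
    intro t ht
    have H := h₀ t ht
    rw [hsq] at H
    simp only [hgdef]
    linear_combination H
  -- derivative of g at τ
  have hAd : HasDerivAt a₀ (deriv a₀ τ) τ := (hd₀ τ).hasDerivAt
  have hBd : HasDerivAt a₂ (deriv a₂ τ) τ := (hd₂ τ).hasDerivAt
  have hf1 : HasDerivAt (fun t : ℝ => ((p : ℝ) - 1) - L * (1 + t) / (2 * (p : ℝ)))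
      (-(L / (2 * (p : ℝ)))) τ := by
    have h := ((((hasDerivAt_id τ).const_add (1 : ℝ)).const_mul L).div_const
      (2 * (p : ℝ))).const_sub ((p : ℝ) - 1)
    exact h.congr_deriv (by ring)
  have hf2 : HasDerivAt (fun t : ℝ => L * (1 - t) / (2 * (p : ℝ)))
      (-(L / (2 * (p : ℝ)))) τ := by
    have h := (((hasDerivAt_id τ).const_sub (1 : ℝ)).const_mul L).div_const (2 * (p : ℝ))
    exact h.congr_deriv (by ring)
  have hgd : HasDerivAt g
      ((-(L / (2 * (p : ℝ)))) * a₀ τ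
        + (((p : ℝ) - 1) - L * (1 + τ) / (2 * (p : ℝ))) * deriv a₀ τ
        + (L / (2 * (p : ℝ))) * a₂ τ
        - (L * (1 - τ) / (2 * (p : ℝ))) * deriv a₂ τ) τ := by
    have h := (hf1.mul hAd).sub (hf2.mul hBd)
    exact h.congr_deriv (by ring)
  have hden : HasDerivAt (fun t : ℝ => 1 + t) 1 τ := by
    simpa using (hasDerivAt_id τ).const_add (1 : ℝ)
  have hquot : HasDerivAt (fun t => g t / (1 + t))
      ((((-(L / (2 * (p : ℝ)))) * a₀ τ
        + (((p : ℝ) - 1) - L * (1 + τ) / (2 * (p : ℝ))) * deriv a₀ τ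
        + (L / (2 * (p : ℝ))) * a₂ τ
        - (L * (1 - τ) / (2 * (p : ℝ))) * deriv a₂ τ) * (1 + τ) - g τ * 1) / (1 + τ) ^ 2) τ :=
    hgd.div hden h1p'
  -- `deriv a₀` agrees with `g / (1 + ·)` near τ
  have hmem : Set.Ioo (-1 : ℝ) 1 ∈ nhds τ := isOpen_Ioo.mem_nhds ⟨ht1, ht2⟩
  have hev : (fun t => g t / (1 + t)) =ᶠ[nhds τ] deriv a₀ := by
    filter_upwards [hmem] with t ht
    have h1t : (1 : ℝ) + t ≠ 0 := by
      have := ht.1; intro h; linarith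
    rw [div_eq_iff h1t]
    linear_combination -(hg t ht)
  have hD2 : deriv (deriv a₀) τ
      = (((-(L / (2 * (p : ℝ)))) * a₀ τ
        + (((p : ℝ) - 1) - L * (1 + τ) / (2 * (p : ℝ))) * deriv a₀ τ
        + (L / (2 * (p : ℝ))) * a₂ τ
        - (L * (1 - τ) / (2 * (p : ℝ))) * deriv a₂ τ) * (1 + τ) - g τ * 1) / (1 + τ) ^ 2 := by
    rw [← hev.deriv_eq]
    exact hquot.deriv
  have hgτ : (1 + τ) * deriv a₀ τ = g τ := hg τ ⟨ht1, ht2⟩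
  have H0 := h₀ τ ⟨ht1, ht2⟩
  have H2 := h₂ τ ⟨ht1, ht2⟩
  rw [hsq] at H0 H2
  have hc : 2 * (p : ℝ) * (L / (2 * (p : ℝ))) = L := by field_simp
  have hstep : (1 - τ ^ 2) * deriv (deriv a₀) τ
      = (1 - τ) * ((-(L / (2 * (p : ℝ)))) * a₀ τ
          + (((p : ℝ) - 1) - L * (1 + τ) / (2 * (p : ℝ))) * deriv a₀ τ
          + (L / (2 * (p : ℝ))) * a₂ τ
          - (L * (1 - τ) / (2 * (p : ℝ))) * deriv a₂ τ)
        - (1 - τ) * deriv a₀ τ := by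
    rw [hD2, ← hgτ]
    field_simp
    ring
  rw [hstep]
  linear_combination ((p : ℝ) - L * (1 - τ) / (2 * (p : ℝ))) * H0
    - (L * (1 - τ) / (2 * (p : ℝ))) * H2 - a₀ τ * hc
end

section
/- Let p ≥ 2 be an integer and set λ = √(p(p+1)). If a₀(τ) = ((1-τ)/2)^{p+1}((1+τ)/2)^{p-1}·C and a₂(τ) = ((1+τ)/2)^{p+1}((1-τ)/2)^{p-1}·D satisfy the coupled system (1+τ)·a₀' + (λ²(1+τ)/(2p) - (p-1))·a₀ + (λ²(1-τ)/(2p))·a₂ = 0 and (1-τ)·a₂' - (λ²(1+τ)/(2p))·a₀ - (λ²(1-τ)/(2p) - (p-1))·a₂ = 0 on (-1,1), then C = D. -/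
/-- For the highest harmonic sector `ℓ = p` of the Maxwell field, substituting the
polynomial branches into the coupled first-order system forces `C = D`. -/
theorem maxwell_constants_coincide (p : ℕ) (hp : 2 ≤ p) (C D : ℝ) (a₀ a₂ : ℝ → ℝ)
    (ha₀ : ∀ τ : ℝ, a₀ τ = ((1 - τ) / 2) ^ (p + 1) * ((1 + τ) / 2) ^ (p - 1) * C)
    (ha₂ : ∀ τ : ℝ, a₂ τ = ((1 + τ) / 2) ^ (p + 1) * ((1 - τ) / 2) ^ (p - 1) * D)
    (h₀ : ∀ τ ∈ Set.Ioo (-1 : ℝ) 1,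
      (1 + τ) * deriv a₀ τ
        + ((Real.sqrt ((p : ℝ) * ((p : ℝ) + 1))) ^ 2 * (1 + τ) / (2 * (p : ℝ)) - ((p : ℝ) - 1))
          * a₀ τ
        + ((Real.sqrt ((p : ℝ) * ((p : ℝ) + 1))) ^ 2 * (1 - τ) / (2 * (p : ℝ))) * a₂ τ = 0)
    (h₂ : ∀ τ ∈ Set.Ioo (-1 : ℝ) 1,
      (1 - τ) * deriv a₂ τ
        - ((Real.sqrt ((p : ℝ) * ((p : ℝ) + 1))) ^ 2 * (1 + τ) / (2 * (p : ℝ))) * a₀ τ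
        - ((Real.sqrt ((p : ℝ) * ((p : ℝ) + 1))) ^ 2 * (1 - τ) / (2 * (p : ℝ)) - ((p : ℝ) - 1))
          * a₂ τ = 0) :
    C = D := by
  obtain ⟨q, rfl⟩ : ∃ q, p = q + 2 := ⟨p - 2, by omega⟩
  have hs : (Real.sqrt (((q + 2 : ℕ) : ℝ) * (((q + 2 : ℕ) : ℝ) + 1))) ^ 2
      = ((q + 2 : ℕ) : ℝ) * (((q + 2 : ℕ) : ℝ) + 1) := Real.sq_sqrt (by positivity)
  have hf : a₀ = fun τ : ℝ => ((1 - τ) / 2) ^ (q + 3) * ((1 + τ) / 2) ^ (q + 1) * C :=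
    funext fun τ => by simpa using ha₀ τ
  have h1 : HasDerivAt (fun τ : ℝ => (1 - τ) / 2) (-1/2) 0 := by
    simpa using (((hasDerivAt_id (0:ℝ)).const_sub 1).div_const 2)
  have h2 : HasDerivAt (fun τ : ℝ => (1 + τ) / 2) (1/2) 0 := by
    simpa using (((hasDerivAt_id (0:ℝ)).const_add 1).div_const 2)
  have hD : HasDerivAt a₀
      ((((q + 3 : ℕ) : ℝ) * ((1 - 0) / 2) ^ (q + 3 - 1) * (-1/2) * ((1 + 0) / 2) ^ (q + 1)
        + ((1 - 0) / 2) ^ (q + 3) * (((q + 1 : ℕ) : ℝ) * ((1 + 0) / 2) ^ (q + 1 - 1) * (1/2))) * C)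
      0 := by
    rw [hf]
    exact ((h1.pow _).mul (h2.pow _)).mul_const C
  have key := h₀ 0 (by constructor <;> norm_num)
  rw [hD.deriv, ha₀ 0, ha₂ 0, hs] at key
  norm_num at key
  have hx : (0:ℝ) < ((1:ℝ)/2) ^ q := by positivity
  have hq2 : ((q:ℝ) + 2) ≠ 0 := by positivity
  field_simp at key
  have key2 : ((q:ℝ)+3)*((q:ℝ)+2)^2*((2:ℝ)^q)^6*(D - C) = 0 := by
    have e : ((q:ℝ)+3)*((1:ℝ)/2)^(q*2+4)*(D-C) = 0 := by linear_combination key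
    have hDC : D - C = 0 := by
      rcases mul_eq_zero.mp e with h | h
      · exact absurd h (ne_of_gt (by positivity))
      · exact h
    rw [hDC, mul_zero]
  have hpos : (0:ℝ) < ((q:ℝ)+3)*((q:ℝ)+2)^2*((2:ℝ)^q)^6 := by positivity
  have : D - C = 0 := by
    rcases mul_eq_zero.mp key2 with h | h
    · exact absurd h hpos.ne'
    · exact h
  linarith
end

section
/- For an integer p ≥ 3, the function a₀(τ) = ((1-τ)/2)^{p+2}·((1+τ)/2)^{p-2}·∫₀^τ ds/((1+s)^{p-1}(1-s)^{p+3}) satisfies the ODE (1-τ²)·a₀''(τ) + (4 + 2(p-1)τ)·a₀'(τ) + 2p·a₀(τ) = 0 on (-1,1). -/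
open Set Filter Topology

private lemma cast_mul_pow_pred {k : ℕ} {x : ℝ} (hx : x ≠ 0) :
    (k : ℝ) * x ^ (k - 1) = (k : ℝ) * x ^ k / x := by
  cases k with
  | zero => simp
  | succ k =>
    rw [Nat.add_sub_cancel, pow_succ]
    field_simp

set_option maxHeartbeats 1000000 in
/-- The singular branch
`a₀(τ) = ((1-τ)/2)^(p+2) ((1+τ)/2)^(p-2) ∫₀^τ ds/((1+s)^(p-1)(1-s)^(p+3))`
solves the spin-2 Jacobi equation `(1-τ²)a₀'' + (4+2(p-1)τ)a₀' + 2p a₀ = 0` on `(-1,1)`. -/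
theorem jacobi_singular_branch_spin2 (p : ℕ) (hp : 3 ≤ p) :
    ∀ τ ∈ Set.Ioo (-1 : ℝ) 1,
      (1 - τ ^ 2) *
          deriv (deriv (fun t : ℝ => ((1 - t) / 2) ^ (p + 2) * ((1 + t) / 2) ^ (p - 2) *
            ∫ s in (0 : ℝ)..t, 1 / ((1 + s) ^ (p - 1) * (1 - s) ^ (p + 3)))) τ
        + (4 + 2 * ((p : ℝ) - 1) * τ) *
          deriv (fun t : ℝ => ((1 - t) / 2) ^ (p + 2) * ((1 + t) / 2) ^ (p - 2) *
            ∫ s in (0 : ℝ)..t, 1 / ((1 + s) ^ (p - 1) * (1 - s) ^ (p + 3))) τ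
        + 2 * (p : ℝ) * (((1 - τ) / 2) ^ (p + 2) * ((1 + τ) / 2) ^ (p - 2) *
            ∫ s in (0 : ℝ)..τ, 1 / ((1 + s) ^ (p - 1) * (1 - s) ^ (p + 3))) = 0 := by
  obtain ⟨m, rfl⟩ : ∃ m, p = m + 3 := ⟨p - 3, by omega⟩
  intro τ hτ
  simp only [show m + 3 + 2 = m + 5 from rfl, show m + 3 - 2 = m + 1 from rfl,
    show m + 3 - 1 = m + 2 from rfl, show m + 3 + 3 = m + 6 from rfl]
  -- notation
  set g : ℝ → ℝ := fun s => 1 / ((1 + s) ^ (m + 2) * (1 - s) ^ (m + 6)) with hg_def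
  set F : ℝ → ℝ := fun t => ∫ s in (0 : ℝ)..t, g s with hF_def
  set f : ℝ → ℝ := fun t => ((1 - t) / 2) ^ (m + 5) * ((1 + t) / 2) ^ (m + 1) * F t with hf_def
  set A1 : ℝ → ℝ := fun t =>
      -((m : ℝ) + 5) / 2 * ((1 - t) / 2) ^ (m + 4) * ((1 + t) / 2) ^ (m + 1)
      + ((m : ℝ) + 1) / 2 * ((1 - t) / 2) ^ (m + 5) * ((1 + t) / 2) ^ m with hA1_def
  set c : ℝ := 2 ^ (2 * m + 6) with hc_def
  have hc : c ≠ 0 := by positivity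
  set f1 : ℝ → ℝ := fun t => A1 t * F t + 1 / (c * (1 - t ^ 2)) with hf1_def
  -- basic nonvanishing facts on Ioo
  have hden : ∀ x ∈ Ioo (-1 : ℝ) 1, ((1 + x) ^ (m + 2) * (1 - x) ^ (m + 6)) ≠ 0 := by
    intro x hx
    have h1 : (0 : ℝ) < 1 + x := by linarith [hx.1]
    have h2 : (0 : ℝ) < 1 - x := by linarith [hx.2]
    positivity
  -- continuity of g on Ioo
  have hgcont : ContinuousOn g (Ioo (-1 : ℝ) 1) := by
    apply ContinuousOn.div continuousOn_const
    · fun_prop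
    · exact hden
  -- derivative of F
  have hF' : ∀ x ∈ Ioo (-1 : ℝ) 1, HasDerivAt F (g x) x := by
    intro x hx
    have h0 : (0 : ℝ) ∈ Ioo (-1 : ℝ) 1 := by constructor <;> norm_num
    have hsub : uIcc (0 : ℝ) x ⊆ Ioo (-1 : ℝ) 1 :=
      (ordConnected_Ioo).uIcc_subset h0 hx
    exact intervalIntegral.integral_hasDerivAt_right
      ((hgcont.mono hsub).intervalIntegrable)
      (hgcont.stronglyMeasurableAtFilter isOpen_Ioo x hx)
      ((hgcont x hx).continuousAt (isOpen_Ioo.mem_nhds hx))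
  -- elementary derivatives
  have hu : ∀ x : ℝ, HasDerivAt (fun t : ℝ => (1 - t) / 2) (-(1 / 2)) x := by
    intro x
    have := ((hasDerivAt_const x (1 : ℝ)).sub (hasDerivAt_id x)).div_const 2
    refine this.congr_deriv ?_
    norm_num
  have hv : ∀ x : ℝ, HasDerivAt (fun t : ℝ => (1 + t) / 2) (1 / 2) x := by
    intro x
    have := ((hasDerivAt_const x (1 : ℝ)).add (hasDerivAt_id x)).div_const 2
    refine this.congr_deriv ?_
    norm_num
  -- first derivative of f
  have hf' : ∀ x ∈ Ioo (-1 : ℝ) 1, HasDerivAt f (f1 x) x := by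
    intro x hx
    have h1 : (0 : ℝ) < 1 + x := by linarith [hx.1]
    have h2 : (0 : ℝ) < 1 - x := by linarith [hx.2]
    have hA : HasDerivAt (fun t : ℝ => ((1 - t) / 2) ^ (m + 5) * ((1 + t) / 2) ^ (m + 1))
        (A1 x) x := by
      have := (((hu x).fun_pow (m + 5)).mul ((hv x).fun_pow (m + 1)))
      refine this.congr_deriv ?_
      simp only [hA1_def, show m + 5 - 1 = m + 4 from rfl, show m + 1 - 1 = m from rfl]
      push_cast
      ring
    have := hA.mul (hF' x hx)
    refine this.congr_deriv ?_
    simp only [hf1_def]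
    have key : ((1 - x) / 2) ^ (m + 5) * ((1 + x) / 2) ^ (m + 1) * g x
        = 1 / (c * (1 - x ^ 2)) := by
      simp only [hg_def, hc_def]
      rw [div_pow, div_pow]
      have h3 : ((1:ℝ) + x) ^ (m + 2) ≠ 0 := by positivity
      have h4 : ((1:ℝ) - x) ^ (m + 6) ≠ 0 := by positivity
      have h5 : ((2:ℝ)) ^ (m + 5) ≠ 0 := by positivity
      have h6 : ((2:ℝ)) ^ (m + 1) ≠ 0 := by positivity
      have h7 : ((2:ℝ)) ^ (2 * m + 6) ≠ 0 := by positivity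
      have h8 : (1:ℝ) - x ^ 2 ≠ 0 := by nlinarith
      field_simp
      ring
    rw [key]
  -- second derivative : derivative of f1
  set A2 : ℝ → ℝ := fun x =>
      -((m : ℝ) + 5) / 2 * (-((m : ℝ) + 4) / 2 * ((1 - x) / 2) ^ (m + 3) * ((1 + x) / 2) ^ (m + 1)
        + ((m : ℝ) + 1) / 2 * ((1 - x) / 2) ^ (m + 4) * ((1 + x) / 2) ^ m)
      + ((m : ℝ) + 1) / 2 * (-((m : ℝ) + 5) / 2 * ((1 - x) / 2) ^ (m + 4) * ((1 + x) / 2) ^ m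
        + (m : ℝ) / 2 * ((1 - x) / 2) ^ (m + 5) * (((1 + x) / 2) ^ m / ((1 + x) / 2)))
      with hA2_def
  have hf1' : ∀ x ∈ Ioo (-1 : ℝ) 1, HasDerivAt f1
      (A2 x * F x + A1 x * g x + 2 * c * x / (c * (1 - x ^ 2)) ^ 2) x := by
    intro x hx
    have h1 : (0 : ℝ) < 1 + x := by linarith [hx.1]
    have h2 : (0 : ℝ) < 1 - x := by linarith [hx.2]
    have hvne : ((1 : ℝ) + x) / 2 ≠ 0 := by positivity
    have hA1d : HasDerivAt A1 (A2 x) x := by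
      have hterm1 := (((hu x).fun_pow (m + 4)).const_mul
        (-((m : ℝ) + 5) / 2)).mul ((hv x).fun_pow (m + 1))
      have hterm2 := (((hu x).fun_pow (m + 5)).const_mul
        (((m : ℝ) + 1) / 2)).mul ((hv x).fun_pow m)
      have hsum := hterm1.add hterm2
      refine hsum.congr_deriv ?_
      simp only [hA2_def, show m + 4 - 1 = m + 3 from rfl, show m + 5 - 1 = m + 4 from rfl,
        show m + 1 - 1 = m from rfl]
      rw [cast_mul_pow_pred (k := m) hvne]
      push_cast
      ring
    have hBd : HasDerivAt (fun t : ℝ => 1 / (c * (1 - t ^ 2)))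
        (2 * c * x / (c * (1 - x ^ 2)) ^ 2) x := by
      have hin : HasDerivAt (fun t : ℝ => c * (1 - t ^ 2)) (c * (-(2 * x))) x := by
        have := ((hasDerivAt_const x (1 : ℝ)).sub (hasDerivAt_pow 2 x)).const_mul c
        refine this.congr_deriv ?_
        push_cast
        ring
      have hne : c * (1 - x ^ 2) ≠ 0 := by
        apply mul_ne_zero hc
        have : (0:ℝ) < 1 - x ^ 2 := by nlinarith [hx.1, hx.2]
        linarith
      have h0 := hin.inv hne
      have : (fun t : ℝ => 1 / (c * (1 - t ^ 2))) = fun t : ℝ => (c * (1 - t ^ 2))⁻¹ := by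
        funext t; rw [one_div]
      rw [this]
      refine h0.congr_deriv ?_
      field_simp
    exact (hA1d.mul (hF' x hx)).add hBd
  have hmem : Ioo (-1 : ℝ) 1 ∈ 𝓝 τ := isOpen_Ioo.mem_nhds hτ
  have hd1 : deriv f τ = f1 τ := (hf' τ hτ).deriv
  have hEv : deriv f =ᶠ[𝓝 τ] f1 := eventually_of_mem hmem fun x hx => (hf' x hx).deriv
  have hd2 : deriv (deriv f) τ = A2 τ * F τ + A1 τ * g τ + 2 * c * τ / (c * (1 - τ ^ 2)) ^ 2 := by
    rw [hEv.deriv_eq]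
    exact (hf1' τ hτ).deriv
  rw [hd1, hd2]
  -- final algebraic identity
  have h1 : (0 : ℝ) < 1 + τ := by linarith [hτ.1]
  have h2 : (0 : ℝ) < 1 - τ := by linarith [hτ.2]
  have h12 : (0 : ℝ) < 1 - τ ^ 2 := by nlinarith
  simp only [hA2_def, hA1_def, hf1_def, hg_def, hc_def]
  have e1 : ((1 - τ) / 2 : ℝ) ≠ 0 := by positivity
  have e2 : ((1 + τ) / 2 : ℝ) ≠ 0 := by positivity
  have e3 : ((1 + τ) ^ (m + 2) * (1 - τ) ^ (m + 6) : ℝ) ≠ 0 := hden τ hτ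
  have hFτ : F τ = ∫ s in (0:ℝ)..τ, 1 / ((1 + s) ^ (m + 2) * (1 - s) ^ (m + 6)) := by
    simp only [hF_def, hg_def]
  rw [← hFτ]
  simp only [div_pow]
  set Fτ := F τ
  have h3 : ((1:ℝ) + τ) ≠ 0 := by positivity
  have h4 : ((1:ℝ) - τ) ≠ 0 := by positivity
  have h5 : ((1:ℝ) - τ ^ 2) ≠ 0 := by positivity
  have n1 : ((2:ℝ)) ^ (m + 5) ≠ 0 := by positivity
  have n2 : ((2:ℝ)) ^ (m + 4) ≠ 0 := by positivity
  have n3 : ((2:ℝ)) ^ (m + 3) ≠ 0 := by positivity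
  have n4 : ((2:ℝ)) ^ (m + 1) ≠ 0 := by positivity
  have n5 : ((2:ℝ)) ^ m ≠ 0 := by positivity
  have n6 : ((2:ℝ)) ^ (2 * m + 6) ≠ 0 := by positivity
  push_cast
  field_simp
  ring
end
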